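/- Assume 4·η·log n ≤ τ. If X* minimizes g over the set of n×n matrices with nonnegative entries and x* = Σ_{i,j} X*ᵢⱼ, then x* ≤ (1/2 + η·log n/(2τ − 2η·log n))·(α+β) + 1/(6·log n). -/

import Mathlib

/-- Generalized KL divergence, with the convention `0 · log 0 = 0`. -/
noncomputable def KL {n : ℕ} (x y : Fin n → ℝ) : ℝ :=
  ∑ i, (x i * Real.log (x i / y i) - x i + y i)

/-- Entropy of a nonnegative matrix, with the convention `0 · log 0 = 0`. -/
noncomputable def entH {n : ℕ} (X : Fin n → Fin n → ℝ) : ℝ :=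
  -∑ i, ∑ j, X i j * (Real.log (X i j) - 1)

/-- The entropic regularized UOT objective. -/
noncomputable def entUOT {n : ℕ} (a b : Fin n → ℝ) (C : Fin n → Fin n → ℝ)
    (τ η : ℝ) (X : Fin n → Fin n → ℝ) : ℝ :=
  (∑ i, ∑ j, C i j * X i j) - η * entH X
    + τ * KL (fun i => ∑ j, X i j) a + τ * KL (fun j => ∑ i, X i j) b

open Finset in
lemma logsum_aux {ι : Type*} (s : Finset ι) (f g : ι → ℝ)
    (hf : ∀ i ∈ s, 0 ≤ f i) (hg : ∀ i ∈ s, 0 < g i) :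
    (∑ i ∈ s, f i) * Real.log ((∑ i ∈ s, f i) / (∑ i ∈ s, g i))
      ≤ ∑ i ∈ s, f i * Real.log (f i / g i) := by
  rcases eq_or_lt_of_le (Finset.sum_nonneg hf) with hF | hF
  · have hz : ∀ i ∈ s, f i = 0 := (Finset.sum_eq_zero_iff_of_nonneg hf).mp hF.symm
    rw [← hF, zero_mul]
    exact Finset.sum_nonneg fun i hi => by rw [hz i hi, zero_mul]
  · have hne : s.Nonempty := by
      by_contra h
      rw [Finset.not_nonempty_iff_eq_empty] at h
      simp [h] at hF
    have hG : 0 < ∑ i ∈ s, g i := Finset.sum_pos hg hne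
    set F := ∑ i ∈ s, f i with hFd
    set G := ∑ i ∈ s, g i with hGd
    have hpt : ∀ i ∈ s, f i * (Real.log (F / G) - Real.log (f i / g i))
        ≤ F / G * g i - f i := by
      intro i hi
      rcases (hf i hi).eq_or_lt with h0 | h0
      · rw [← h0, zero_mul, sub_zero]
        have : 0 < F / G * g i := mul_pos (div_pos hF hG) (hg i hi)
        linarith
      · have hgi := hg i hi
        have harg : 0 < g i * F / (f i * G) := by positivity
        have hlog := Real.log_le_sub_one_of_pos harg
        have heq : Real.log (g i * F / (f i * G))
            = Real.log (F / G) - Real.log (f i / g i) := by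
          rw [Real.log_div (by positivity : g i * F ≠ 0) (by positivity : f i * G ≠ 0),
            Real.log_div hF.ne' hG.ne', Real.log_div h0.ne' hgi.ne',
            Real.log_mul hgi.ne' hF.ne', Real.log_mul h0.ne' hG.ne']
          ring
        rw [← heq]
        have h2 : f i * Real.log (g i * F / (f i * G)) ≤ f i * (g i * F / (f i * G) - 1) :=
          mul_le_mul_of_nonneg_left hlog h0.le
        have h3 : f i * (g i * F / (f i * G) - 1) = F / G * g i - f i := by
          field_simp
        linarith
    have hsum := Finset.sum_le_sum hpt
    have hL : ∑ i ∈ s, f i * (Real.log (F / G) - Real.log (f i / g i))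
        = F * Real.log (F / G) - ∑ i ∈ s, f i * Real.log (f i / g i) := by
      simp only [mul_sub, Finset.sum_sub_distrib, ← Finset.sum_mul]
      rfl
    have hR : ∑ i ∈ s, (F / G * g i - f i) = 0 := by
      rw [Finset.sum_sub_distrib, ← Finset.mul_sum, ← hGd, ← hFd]
      field_simp
      ring
    rw [hL, hR] at hsum
    linarith


lemma entUOT_scale {n : ℕ} (a b : Fin n → ℝ) (ha : ∀ i, 0 < a i) (hb : ∀ j, 0 < b j)
    (C : Fin n → Fin n → ℝ) (τ η t : ℝ) (ht : 0 < t)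
    (X : Fin n → Fin n → ℝ) (hX : ∀ i j, 0 ≤ X i j) :
    entUOT a b C τ η (fun i j => t * X i j)
      = t * (entUOT a b C τ η X - τ * ((∑ i, a i) + (∑ j, b j)))
        + (η + 2 * τ) * (∑ i, ∑ j, X i j) * (t * Real.log t)
        + τ * ((∑ i, a i) + (∑ j, b j)) := by
  have pt : ∀ x : ℝ, 0 ≤ x →
      t * x * (Real.log (t * x) - 1) = t * (x * (Real.log x - 1)) + x * (t * Real.log t) := by
    intro x hx
    rcases hx.eq_or_lt with h | h
    · simp [← h]
    · rw [Real.log_mul ht.ne' h.ne']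
      ring
  have ptr : ∀ r c : ℝ, 0 ≤ r → 0 < c →
      t * r * Real.log (t * r / c) - t * r + c
        = t * (r * Real.log (r / c) - r + c) + r * (t * Real.log t) + (1 - t) * c := by
    intro r c hr hc
    rcases hr.eq_or_lt with h | h
    · simp [← h]
      ring
    · have : t * r / c = t * (r / c) := by ring
      rw [this, Real.log_mul ht.ne' (div_pos h hc).ne']
      ring
  have h1 : ∑ i, ∑ j, C i j * (t * X i j) = t * ∑ i, ∑ j, C i j * X i j := by
    simp only [Finset.mul_sum]
    exact Finset.sum_congr rfl fun i _ => Finset.sum_congr rfl fun j _ => by ring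
  have h2 : ∑ i, ∑ j, t * X i j * (Real.log (t * X i j) - 1)
      = t * (∑ i, ∑ j, X i j * (Real.log (X i j) - 1))
        + (∑ i, ∑ j, X i j) * (t * Real.log t) := by
    have e : ∀ i j, t * X i j * (Real.log (t * X i j) - 1)
        = t * (X i j * (Real.log (X i j) - 1)) + X i j * (t * Real.log t) :=
      fun i j => pt _ (hX i j)
    simp only [e, Finset.sum_add_distrib, ← Finset.mul_sum, ← Finset.sum_mul]
  have hrs : ∀ i, (∑ j, t * X i j) = t * ∑ j, X i j := fun i => (Finset.mul_sum _ _ _).symm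
  have hcs : ∀ j, (∑ i, t * X i j) = t * ∑ i, X i j := fun j => (Finset.mul_sum _ _ _).symm
  have h3 : ∑ i, ((∑ j, t * X i j) * Real.log ((∑ j, t * X i j) / a i)
        - (∑ j, t * X i j) + a i)
      = t * (∑ i, ((∑ j, X i j) * Real.log ((∑ j, X i j) / a i) - (∑ j, X i j) + a i))
        + (∑ i, ∑ j, X i j) * (t * Real.log t) + (1 - t) * (∑ i, a i) := by
    simp only [hrs]
    have e : ∀ i : Fin n, t * (∑ j, X i j) * Real.log (t * (∑ j, X i j) / a i)
          - t * (∑ j, X i j) + a i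
        = t * ((∑ j, X i j) * Real.log ((∑ j, X i j) / a i) - (∑ j, X i j) + a i)
          + (∑ j, X i j) * (t * Real.log t) + (1 - t) * a i :=
      fun i => ptr _ _ (Finset.sum_nonneg fun j _ => hX i j) (ha i)
    simp only [e, Finset.sum_add_distrib, ← Finset.mul_sum, ← Finset.sum_mul]
  have h4 : ∑ j, ((∑ i, t * X i j) * Real.log ((∑ i, t * X i j) / b j)
        - (∑ i, t * X i j) + b j)
      = t * (∑ j, ((∑ i, X i j) * Real.log ((∑ i, X i j) / b j) - (∑ i, X i j) + b j))
        + (∑ i, ∑ j, X i j) * (t * Real.log t) + (1 - t) * (∑ j, b j) := by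
    simp only [hcs]
    have e : ∀ j : Fin n, t * (∑ i, X i j) * Real.log (t * (∑ i, X i j) / b j)
          - t * (∑ i, X i j) + b j
        = t * ((∑ i, X i j) * Real.log ((∑ i, X i j) / b j) - (∑ i, X i j) + b j)
          + (∑ i, X i j) * (t * Real.log t) + (1 - t) * b j :=
      fun j => ptr _ _ (Finset.sum_nonneg fun i _ => hX i j) (hb j)
    simp only [e, Finset.sum_add_distrib, ← Finset.mul_sum, ← Finset.sum_mul]
    rw [Finset.sum_comm]
  simp only [entUOT, entH, KL]
  rw [h1, h2, h3, h4]
  ring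

set_option maxHeartbeats 1600000 in
lemma final_bound (L τ η A B s : ℝ) (hL : 0 < L) (hτ : 0 < τ) (hη : 0 < η)
    (hητ : 4 * η * L ≤ τ) (hA : 0 < A) (hB : 0 < B) (hs : 0 < s)
    (key : (2 * τ + η) * Real.log s ≤ 2 * η * L + τ * (Real.log A + Real.log B)) :
    s ≤ (1 / 2 + η * L / (2 * τ - 2 * η * L)) * (A + B) + 1 / (6 * L) := by
  have hηL : 0 < η * L := mul_pos hη hL
  have hτL : 0 < τ - η * L := by nlinarith
  have h2τη : 0 < 2 * τ + η := by linarith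
  obtain ⟨ε, hεd⟩ : ∃ z : ℝ, z = η / (2 * τ + η) := ⟨_, rfl⟩
  have hε0 : 0 < ε := hεd ▸ div_pos hη h2τη
  have hε1 : ε < 1 := by rw [hεd, div_lt_one h2τη]; linarith
  have h1ε : 0 < 1 - ε := by linarith
  obtain ⟨x, hxd⟩ : ∃ z : ℝ, z = 2 * η * L / (2 * τ + η) := ⟨_, rfl⟩
  have hx0 : 0 < x := hxd ▸ div_pos (by nlinarith) h2τη
  have hx1 : x ≤ 1 / 4 := by
    rw [hxd, div_le_iff₀ h2τη]; nlinarith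
  obtain ⟨δ, hδd⟩ : ∃ z : ℝ, z = η * L / (τ - η * L) := ⟨_, rfl⟩
  have hδ0 : 0 < δ := hδd ▸ div_pos hηL hτL
  -- exp x ≤ 1 + δ
  have hexp : Real.exp x ≤ 1 + δ := by
    have hb := Real.exp_bound' hx0.le (by linarith) (n := 2) (by norm_num)
    have hsum : (∑ m ∈ Finset.range 2, x ^ m / m.factorial) = 1 + x := by
      simp [Finset.sum_range_succ]
    rw [hsum] at hb
    have hb' : Real.exp x ≤ 1 + x + x ^ 2 * (3 / 4) := by
      norm_num at hb
      linarith
    have e1 : x * (2 * τ + η) = 2 * (η * L) := by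
      rw [hxd]; field_simp
    have e3 : (x + x ^ 2 * (3 / 4)) * ((2 * τ + η) ^ 2)
        = 2 * (η * L) * (2 * τ + η) + 3 * (η * L) ^ 2 := by
      linear_combination ((2 * τ + η) + (3 / 4) * (x * (2 * τ + η) + 2 * (η * L))) * e1
    have hxδ : x + x ^ 2 * (3 / 4) ≤ δ := by
      rw [hδd, le_div_iff₀ hτL]
      nlinarith [e3, mul_pos h2τη h2τη, mul_pos hη hτ, mul_pos hηL hτ,
        mul_pos hη hηL, mul_pos hηL hηL, mul_pos (mul_pos hη hηL) hηL]
    linarith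
  obtain ⟨M, hMd⟩ : ∃ z : ℝ, z = (A + B) / 2 := ⟨_, rfl⟩
  have hM : 0 < M := by rw [hMd]; positivity
  obtain ⟨y, hyd⟩ : ∃ z : ℝ, z = Real.log M := ⟨_, rfl⟩
  obtain ⟨y0, hy0d⟩ : ∃ z : ℝ, z = (x - Real.log ((1 + δ) / (1 - ε))) / ε := ⟨_, rfl⟩
  have hw : Real.exp (x - ε * y0) = (1 + δ) / (1 - ε) := by
    have harg : x - ε * y0 = Real.log ((1 + δ) / (1 - ε)) := by
      rw [hy0d]; field_simp; ring
    rw [harg, Real.exp_log (div_pos (by linarith) h1ε)]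
  have hAB : Real.log A + Real.log B ≤ 2 * y := by
    have h1 : A * B ≤ M ^ 2 := by nlinarith [sq_nonneg (A - B)]
    have h2 := Real.log_le_log (mul_pos hA hB) h1
    rw [Real.log_mul hA.ne' hB.ne', Real.log_pow] at h2
    push_cast at h2
    rw [hyd]
    linarith
  have hlogs : Real.log s ≤ (1 - ε) * y + x := by
    have h2 : (2 * τ + η) * Real.log s ≤ 2 * η * L + 2 * τ * y := by
      have h2a := mul_le_mul_of_nonneg_left hAB hτ.le
      linarith [key, h2a]
    have h3 : (1 - ε) * y + x = (2 * η * L + 2 * τ * y) / (2 * τ + η) := by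
      rw [hεd, hxd]; field_simp; ring
    rw [h3, le_div_iff₀ h2τη]
    linarith [h2]
  have hsle : s ≤ Real.exp ((1 - ε) * y + x) := by
    calc s = Real.exp (Real.log s) := (Real.exp_log hs).symm
    _ ≤ _ := Real.exp_le_exp.mpr hlogs
  have hconv : Real.exp ((1 - ε) * y + x)
      ≤ (1 - ε) * Real.exp (y + (x - ε * y0)) + ε * Real.exp (y0 + (x - ε * y0)) := by
    have hcf := convexOn_exp.2 (Set.mem_univ (y + (x - ε * y0)))
      (Set.mem_univ (y0 + (x - ε * y0))) h1ε.le hε0.le (by ring)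
    have harg : (1 - ε) • (y + (x - ε * y0)) + ε • (y0 + (x - ε * y0)) = (1 - ε) * y + x := by
      simp only [smul_eq_mul]; ring
    rw [harg] at hcf
    simpa only [smul_eq_mul] using hcf
  have hsplit1 : Real.exp (y + (x - ε * y0)) = M * ((1 + δ) / (1 - ε)) := by
    rw [Real.exp_add, hw, hyd, Real.exp_log hM]
  have hsplit2 : Real.exp (y0 + (x - ε * y0)) = Real.exp y0 * ((1 + δ) / (1 - ε)) := by
    rw [Real.exp_add, hw]
  have hy0 : Real.exp y0 ≤ 1 := by
    rw [Real.exp_le_one_iff, hy0d]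
    apply div_nonpos_of_nonpos_of_nonneg _ hε0.le
    have h5 : Real.exp x ≤ (1 + δ) / (1 - ε) := by
      apply hexp.trans
      rw [le_div_iff₀ h1ε]
      nlinarith
    have h6 : x ≤ Real.log ((1 + δ) / (1 - ε)) := by
      calc x = Real.log (Real.exp x) := (Real.log_exp x).symm
      _ ≤ _ := Real.log_le_log (Real.exp_pos x) h5
    linarith
  have hcoef : ε * ((1 + δ) / (1 - ε)) ≤ 1 / (6 * L) := by
    have e1 : ε * ((1 + δ) / (1 - ε)) = η / (2 * (τ - η * L)) := by
      have hd1 : 1 + δ = τ / (τ - η * L) := by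
        rw [hδd]; field_simp; ring
      have hd2 : 1 - ε = 2 * τ / (2 * τ + η) := by
        rw [hεd]; field_simp; ring
      rw [hd1, hd2, hεd, div_div_div_eq, div_mul_div_comm]
      rw [div_eq_div_iff (by positivity) (by positivity)]
      ring
    rw [e1, div_le_div_iff₀ (by linarith) (by positivity)]
    nlinarith
  have hcoefpos : 0 < (1 + δ) / (1 - ε) := div_pos (by linarith) h1ε
  have hfinal : s ≤ (1 + δ) * M + 1 / (6 * L) := by
    have hstep : ε * (Real.exp y0 * ((1 + δ) / (1 - ε))) ≤ 1 / (6 * L) := by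
      have : ε * (Real.exp y0 * ((1 + δ) / (1 - ε)))
          = Real.exp y0 * (ε * ((1 + δ) / (1 - ε))) := by ring
      rw [this]
      calc Real.exp y0 * (ε * ((1 + δ) / (1 - ε)))
          ≤ 1 * (ε * ((1 + δ) / (1 - ε))) := by
            apply mul_le_mul_of_nonneg_right hy0 (by positivity)
      _ = ε * ((1 + δ) / (1 - ε)) := by ring
      _ ≤ 1 / (6 * L) := hcoef
    have hmain : (1 - ε) * (M * ((1 + δ) / (1 - ε))) = (1 + δ) * M := by
      field_simp
    calc s ≤ Real.exp ((1 - ε) * y + x) := hsle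
    _ ≤ (1 - ε) * Real.exp (y + (x - ε * y0)) + ε * Real.exp (y0 + (x - ε * y0)) := hconv
    _ = (1 + δ) * M + ε * (Real.exp y0 * ((1 + δ) / (1 - ε))) := by
        rw [hsplit1, hsplit2, hmain]
    _ ≤ (1 + δ) * M + 1 / (6 * L) := by linarith
  have hco : (1 + δ) * M = (1 / 2 + η * L / (2 * τ - 2 * η * L)) * (A + B) := by
    rw [hδd, hMd]
    have h2 : (2 : ℝ) * τ - 2 * η * L ≠ 0 := by
      intro h; nlinarith
    field_simp
  linarith


set_option maxHeartbeats 1600000 in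

/-- Assuming `4·η·log n ≤ τ`, if `X*` minimizes `g` over nonnegative matrices, then
`x* ≤ (1/2 + η·log n/(2τ − 2η·log n))·(α+β) + 1/(6·log n)`. -/
theorem stmt_11 {n : ℕ} (hn : 2 ≤ n) (a b : Fin n → ℝ)
    (ha : ∀ i, 0 < a i) (hb : ∀ j, 0 < b j)
    (C : Fin n → Fin n → ℝ) (hC : ∀ i j, 0 ≤ C i j)
    (τ η : ℝ) (hτ : 0 < τ) (hη : 0 < η)
    (hητ : 4 * η * Real.log n ≤ τ)
    (Xstar : Fin n → Fin n → ℝ) (hXstar : ∀ i j, 0 ≤ Xstar i j)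
    (hmin : ∀ Y : Fin n → Fin n → ℝ, (∀ i j, 0 ≤ Y i j) →
      entUOT a b C τ η Xstar ≤ entUOT a b C τ η Y) :
    (∑ i, ∑ j, Xstar i j)
      ≤ (1 / 2 + η * Real.log n / (2 * τ - 2 * η * Real.log n))
          * ((∑ i, a i) + (∑ j, b j))
        + 1 / (6 * Real.log n) := by
  have hn1 : (1 : ℝ) < n := by exact_mod_cast hn
  have hL0 : 0 < Real.log n := Real.log_pos hn1
  haveI : NeZero n := ⟨by omega⟩
  have hA : 0 < ∑ i, a i := Finset.sum_pos (fun i _ => ha i) Finset.univ_nonempty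
  have hB : 0 < ∑ j, b j := Finset.sum_pos (fun j _ => hb j) Finset.univ_nonempty
  have hηL : 0 < η * Real.log n := mul_pos hη hL0
  have hτL : 0 < τ - η * Real.log n := by nlinarith
  have hs0 : 0 ≤ ∑ i, ∑ j, Xstar i j :=
    Finset.sum_nonneg fun i _ => Finset.sum_nonneg fun j _ => hXstar i j
  rcases hs0.eq_or_lt with hs | hs
  · rw [← hs]
    have c1 : 0 ≤ η * Real.log n / (2 * τ - 2 * η * Real.log n) :=
      div_nonneg hηL.le (by linarith)
    have c2 : (0:ℝ) ≤ 1 / (6 * Real.log n) := by positivity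
    have c3 : 0 ≤ (1 / 2 + η * Real.log n / (2 * τ - 2 * η * Real.log n))
        * ((∑ i, a i) + (∑ j, b j)) := mul_nonneg (by linarith) (by linarith)
    linarith
  · -- Step 1: approximate first-order condition via scaling
    have hstep : ∀ u : ℝ, 0 < u → u < 1 →
        entUOT a b C τ η Xstar - τ * ((∑ i, a i) + (∑ j, b j))
          + (η + 2 * τ) * (∑ i, ∑ j, Xstar i j)
          ≤ (η + 2 * τ) * (∑ i, ∑ j, Xstar i j) * u := by
      intro u hu hu1
      have ht : 0 < 1 - u := by linarith
      have hY := hmin (fun i j => (1 - u) * Xstar i j)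
        (fun i j => mul_nonneg ht.le (hXstar i j))
      rw [entUOT_scale a b ha hb C τ η (1 - u) ht Xstar hXstar] at hY
      have hlog : Real.log (1 - u) ≤ -u := by
        have := Real.log_le_sub_one_of_pos ht; linarith
      have hKs : 0 ≤ (η + 2 * τ) * (∑ i, ∑ j, Xstar i j) := mul_nonneg (by linarith) hs0
      have h2 : (η + 2 * τ) * (∑ i, ∑ j, Xstar i j) * ((1 - u) * Real.log (1 - u))
          ≤ (η + 2 * τ) * (∑ i, ∑ j, Xstar i j) * ((1 - u) * (-u)) :=
        mul_le_mul_of_nonneg_left (mul_le_mul_of_nonneg_left hlog ht.le) hKs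
      have h5 : u * (entUOT a b C τ η Xstar - τ * ((∑ i, a i) + (∑ j, b j))
            + (η + 2 * τ) * (∑ i, ∑ j, Xstar i j)
            - (η + 2 * τ) * (∑ i, ∑ j, Xstar i j) * u)
          ≤ u * 0 := by nlinarith [hY, h2]
      have h6 := le_of_mul_le_mul_left h5 hu
      linarith
    have hKspos : 0 < (η + 2 * τ) * (∑ i, ∑ j, Xstar i j) := mul_pos (by linarith) hs
    have hD : entUOT a b C τ η Xstar - τ * ((∑ i, a i) + (∑ j, b j))
        + (η + 2 * τ) * (∑ i, ∑ j, Xstar i j) ≤ 0 := by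
      apply le_of_forall_pos_le_add
      intro ε hε
      have humin : 0 < min (1/2 : ℝ) (ε / ((η + 2 * τ) * (∑ i, ∑ j, Xstar i j))) :=
        lt_min (by norm_num) (div_pos hε hKspos)
      have hu1 : min (1/2 : ℝ) (ε / ((η + 2 * τ) * (∑ i, ∑ j, Xstar i j))) < 1 :=
        lt_of_le_of_lt (min_le_left _ _) (by norm_num)
      refine (hstep _ humin hu1).trans ?_
      have h7 : (η + 2 * τ) * (∑ i, ∑ j, Xstar i j)
            * min (1/2 : ℝ) (ε / ((η + 2 * τ) * (∑ i, ∑ j, Xstar i j)))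
          ≤ (η + 2 * τ) * (∑ i, ∑ j, Xstar i j)
            * (ε / ((η + 2 * τ) * (∑ i, ∑ j, Xstar i j))) :=
        mul_le_mul_of_nonneg_left (min_le_right _ _) hKspos.le
      rw [mul_div_cancel₀ _ hKspos.ne'] at h7
      linarith
    -- Step 2: unfold the objective
    have hE : entUOT a b C τ η Xstar
        = (∑ i, ∑ j, C i j * Xstar i j)
          + η * (∑ i, ∑ j, Xstar i j * (Real.log (Xstar i j) - 1))
          + τ * KL (fun i => ∑ j, Xstar i j) a + τ * KL (fun j => ∑ i, Xstar i j) b := by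
      simp only [entUOT, entH]; ring
    have hcomm : (∑ j, ∑ i, Xstar i j) = ∑ i, ∑ j, Xstar i j := Finset.sum_comm
    have hKLa : KL (fun i => ∑ j, Xstar i j) a
        = (∑ i, (∑ j, Xstar i j) * Real.log ((∑ j, Xstar i j) / a i))
          - (∑ i, ∑ j, Xstar i j) + (∑ i, a i) := by
      simp only [KL, Finset.sum_add_distrib, Finset.sum_sub_distrib]
    have hKLb : KL (fun j => ∑ i, Xstar i j) b
        = (∑ j, (∑ i, Xstar i j) * Real.log ((∑ i, Xstar i j) / b j))
          - (∑ i, ∑ j, Xstar i j) + (∑ j, b j) := by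
      simp only [KL, Finset.sum_add_distrib, Finset.sum_sub_distrib, hcomm]
    have hXlog : (∑ i, ∑ j, Xstar i j * (Real.log (Xstar i j) - 1))
        = (∑ i, ∑ j, Xstar i j * Real.log (Xstar i j)) - (∑ i, ∑ j, Xstar i j) := by
      simp only [mul_sub, mul_one, Finset.sum_sub_distrib]
    have hc : 0 ≤ ∑ i, ∑ j, C i j * Xstar i j :=
      Finset.sum_nonneg fun i _ => Finset.sum_nonneg fun j _ =>
        mul_nonneg (hC i j) (hXstar i j)
    rw [hE, hKLa, hKLb, hXlog] at hD
    -- Step 3: log-sum bounds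
    have hgA := logsum_aux Finset.univ (fun i => ∑ j, Xstar i j) a
      (fun i _ => Finset.sum_nonneg fun j _ => hXstar i j) (fun i _ => ha i)
    have hgB := logsum_aux Finset.univ (fun j => ∑ i, Xstar i j) b
      (fun j _ => Finset.sum_nonneg fun i _ => hXstar i j) (fun j _ => hb j)
    rw [hcomm] at hgB
    have hgS := logsum_aux (Finset.univ : Finset (Fin n × Fin n))
      (fun p => Xstar p.1 p.2) (fun _ => (1:ℝ))
      (fun p _ => hXstar p.1 p.2) (fun p _ => one_pos)
    simp only [div_one] at hgS
    have hsum1 : (∑ p : Fin n × Fin n, Xstar p.1 p.2) = ∑ i, ∑ j, Xstar i j := by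
      rw [← Finset.univ_product_univ, Finset.sum_product]
    have hsum2 : (∑ p : Fin n × Fin n, Xstar p.1 p.2 * Real.log (Xstar p.1 p.2))
        = ∑ i, ∑ j, Xstar i j * Real.log (Xstar i j) := by
      rw [← Finset.univ_product_univ, Finset.sum_product]
    have hsum3 : (∑ _p : Fin n × Fin n, (1:ℝ)) = (n : ℝ) * n := by
      simp [Finset.card_univ]
    rw [hsum1, hsum2, hsum3] at hgS
    -- Step 4: rewrite the logs of quotients
    have hnne : ((n : ℝ) * n) ≠ 0 := by positivity
    have hlogA : Real.log ((∑ i, ∑ j, Xstar i j) / (∑ i, a i))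
        = Real.log (∑ i, ∑ j, Xstar i j) - Real.log (∑ i, a i) :=
      Real.log_div hs.ne' hA.ne'
    have hlogB : Real.log ((∑ i, ∑ j, Xstar i j) / (∑ j, b j))
        = Real.log (∑ i, ∑ j, Xstar i j) - Real.log (∑ j, b j) :=
      Real.log_div hs.ne' hB.ne'
    have hlogN : Real.log ((∑ i, ∑ j, Xstar i j) / ((n : ℝ) * n))
        = Real.log (∑ i, ∑ j, Xstar i j) - (Real.log n + Real.log n) := by
      rw [Real.log_div hs.ne' hnne, Real.log_mul (by positivity) (by positivity)]
    rw [hlogA] at hgA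
    rw [hlogB] at hgB
    rw [hlogN] at hgS
    -- Step 5: the key inequality
    have key : (2 * τ + η) * Real.log (∑ i, ∑ j, Xstar i j)
        ≤ 2 * η * Real.log n
          + τ * (Real.log (∑ i, a i) + Real.log (∑ j, b j)) := by
      have m1 := mul_le_mul_of_nonneg_left hgA hτ.le
      have m2 := mul_le_mul_of_nonneg_left hgB hτ.le
      have m3 := mul_le_mul_of_nonneg_left hgS hη.le
      have hcomb : (∑ i, ∑ j, Xstar i j) * ((2 * τ + η) * Real.log (∑ i, ∑ j, Xstar i j)
            - (2 * η * Real.log n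
              + τ * (Real.log (∑ i, a i) + Real.log (∑ j, b j))))
          ≤ (∑ i, ∑ j, Xstar i j) * 0 := by nlinarith [m1, m2, m3, hD, hc]
      have := le_of_mul_le_mul_left hcomb hs
      linarith
    exact final_bound (Real.log n) τ η (∑ i, a i) (∑ j, b j) (∑ i, ∑ j, Xstar i j)
      hL0 hτ hη hητ hA hB hs key
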